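/- Let D be the closure of the inductive limit operator of a countable inductive system of densely defined self-adjoint operators D_j, and let λ ∈ ℂ \ ℝ. Then for every j, I_j ∘ R_λ(D_j) ∘ I_j* = P_j ∘ R_λ(D) ∘ P_j as bounded operators on H, and the sequence (P_j R_λ(D) P_j)_{j∈ℕ} converges to R_λ(D) in the strong operator topology (pointwise in norm on H). -/

import Mathlib

open scoped InnerProductSpace
open Filter Topology

/-- `R` is the resolvent of the (unbounded) operator `T` at `lam`. -/
def IsResolvent {K : Type*} [NormedAddCommGroup K] [InnerProductSpace ℂ K]
    (T : K →ₗ.[ℂ] K) (lam : ℂ) (R : K →L[ℂ] K) : Prop :=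
  (∀ y : K, ∃ h : R y ∈ T.domain, T ⟨R y, h⟩ - lam • R y = y) ∧
  ∀ x : T.domain, R (T x - lam • (x : K)) = x

section Aux

variable {K : Type*} [NormedAddCommGroup K] [InnerProductSpace ℂ K] [CompleteSpace K]

omit [CompleteSpace K] in
lemma aux_fix {P : K →L[ℂ] K} (hid : IsIdempotentElem P) {x : K}
    (hx : x ∈ Set.range P) : P x = x := by
  obtain ⟨y, rfl⟩ := hx
  have := congrFun (congrArg (fun f : K →L[ℂ] K => (f : K → K)) hid) y
  simpa [ContinuousLinearMap.mul_apply] using this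

lemma aux_inner_sa {A : K →L[ℂ] K} (hsa : IsSelfAdjoint A) (x y : K) :
    ⟪A x, y⟫_ℂ = ⟪x, A y⟫_ℂ := by
  have hadj : ContinuousLinearMap.adjoint A = A := ContinuousLinearMap.isSelfAdjoint_iff'.1 hsa
  conv_lhs => rw [← hadj]
  exact ContinuousLinearMap.adjoint_inner_left A y x

lemma aux_norm_le {P : K →L[ℂ] K} (hsa : IsSelfAdjoint P) (hid : IsIdempotentElem P)
    (z : K) : ‖P z‖ ≤ ‖z‖ := by
  have h1 : ⟪P z, P z⟫_ℂ = ⟪P z, z⟫_ℂ := by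
    calc ⟪P z, P z⟫_ℂ = ⟪P (P z), z⟫_ℂ := (aux_inner_sa hsa (P z) z).symm
      _ = ⟪P z, z⟫_ℂ := by rw [aux_fix hid ⟨z, rfl⟩]
  have h2 : ‖P z‖ ^ 2 ≤ ‖P z‖ * ‖z‖ := by
    calc ‖P z‖ ^ 2 = ‖⟪P z, P z⟫_ℂ‖ := by
          rw [@inner_self_eq_norm_sq_to_K ℂ]; simp
      _ = ‖⟪P z, z⟫_ℂ‖ := by rw [h1]
      _ ≤ ‖P z‖ * ‖z‖ := norm_inner_le_norm _ _
  nlinarith [norm_nonneg (P z), norm_nonneg z]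

lemma aux_proj_eq {P Q : K →L[ℂ] K} (hsaP : IsSelfAdjoint P) (hidP : IsIdempotentElem P)
    (hsaQ : IsSelfAdjoint Q) (hidQ : IsIdempotentElem Q)
    (hr : Set.range P = Set.range Q) : P = Q := by
  ext y
  have h1 : Q (P y) = P y := aux_fix hidQ (hr ▸ ⟨y, rfl⟩)
  have h2 : ∀ x, P (Q x) = Q x := fun x => aux_fix hidP (hr ▸ ⟨x, rfl⟩ : Q x ∈ Set.range P)
  rw [← h1]
  refine ext_inner_right ℂ fun v => ?_
  calc ⟪Q (P y), v⟫_ℂ = ⟪P y, Q v⟫_ℂ := aux_inner_sa hsaQ _ _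
    _ = ⟪y, P (Q v)⟫_ℂ := aux_inner_sa hsaP _ _
    _ = ⟪y, Q v⟫_ℂ := by rw [h2]
    _ = ⟪Q y, v⟫_ℂ := (aux_inner_sa hsaQ _ _).symm

end Aux

/-- `I_j R_λ(D_j) I_j* = P_j R_λ(D) P_j`, and `P_j R_λ(D) P_j → R_λ(D)`
in the strong operator topology. -/
theorem stmt3
    (H : ℕ → Type*) [∀ j, NormedAddCommGroup (H j)] [∀ j, InnerProductSpace ℂ (H j)]
    [∀ j, CompleteSpace (H j)]
    (Hlim : Type*) [NormedAddCommGroup Hlim] [InnerProductSpace ℂ Hlim] [CompleteSpace Hlim]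
    (I : ∀ j k : ℕ, j ≤ k → H j →ₗᵢ[ℂ] H k) (J : ∀ j : ℕ, H j →ₗᵢ[ℂ] Hlim)
    (hI : ∀ (j k l : ℕ) (hjk : j ≤ k) (hkl : k ≤ l) (ξ : H j),
      I k l hkl (I j k hjk ξ) = I j l (hjk.trans hkl) ξ)
    (hJ : ∀ (j k : ℕ) (hjk : j ≤ k) (ξ : H j), J k (I j k hjk ξ) = J j ξ)
    (hdense : Dense (⋃ j, Set.range (J j)))
    (D : ∀ j, H j →ₗ.[ℂ] H j)
    (hDdense : ∀ j, Dense ((D j).domain : Set (H j)))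
    (hDsa : ∀ j, IsSelfAdjoint (D j))
    (hDcompat : ∀ (j k : ℕ) (hjk : j ≤ k) (ξ : (D j).domain),
      ∃ h : I j k hjk ξ ∈ (D k).domain, (D k) ⟨I j k hjk ξ, h⟩ = I j k hjk ((D j) ξ))
    (D₀ : Hlim →ₗ.[ℂ] Hlim)
    (hdom : (D₀.domain : Set Hlim) = ⋃ j, (J j) '' ((D j).domain : Set (H j)))
    (hact : ∀ (j : ℕ) (ξ : (D j).domain) (h : J j ξ ∈ D₀.domain), D₀ ⟨J j ξ, h⟩ = J j ((D j) ξ))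
    (P : ℕ → Hlim →L[ℂ] Hlim)
    (hP : ∀ j, IsSelfAdjoint (P j) ∧ IsIdempotentElem (P j) ∧
      Set.range (P j) = Set.range (J j))
    (lam : ℂ) (hlam : lam.im ≠ 0)
    (R : Hlim →L[ℂ] Hlim) (hR : IsResolvent D₀.closure lam R) :
    (∀ (j : ℕ) (Rj : H j →L[ℂ] H j), IsResolvent (D j) lam Rj →
      (J j).toContinuousLinearMap ∘L Rj ∘L
          ContinuousLinearMap.adjoint (J j).toContinuousLinearMap =
        P j ∘L R ∘L P j) ∧
    ∀ x : Hlim, Tendsto (fun j => (P j ∘L R ∘L P j) x) atTop (𝓝 (R x)) := by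
  -- J* J = 1
  have hJadjJ : ∀ (j : ℕ) (ξ : H j),
      ContinuousLinearMap.adjoint (J j).toContinuousLinearMap (J j ξ) = ξ := by
    intro j ξ
    refine ext_inner_right ℂ fun v => ?_
    rw [show J j ξ = (J j).toContinuousLinearMap ξ from rfl,
      ContinuousLinearMap.adjoint_inner_left]
    simp only [LinearIsometry.coe_toContinuousLinearMap]
    exact (J j).inner_map_map ξ v
  -- P j = J j ∘ J j*
  have hPJ : ∀ j, P j = (J j).toContinuousLinearMap ∘L
      ContinuousLinearMap.adjoint (J j).toContinuousLinearMap := by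
    intro j
    obtain ⟨hsa, hid, hr⟩ := hP j
    refine aux_proj_eq hsa hid ?_ ?_ ?_
    · rw [ContinuousLinearMap.isSelfAdjoint_iff', ContinuousLinearMap.adjoint_comp,
        ContinuousLinearMap.adjoint_adjoint]
    · rw [IsIdempotentElem]
      ext y
      simp only [ContinuousLinearMap.mul_apply, ContinuousLinearMap.comp_apply,
        LinearIsometry.coe_toContinuousLinearMap]
      rw [hJadjJ]
    · rw [hr]
      apply Set.Subset.antisymm
      · rintro _ ⟨ξ, rfl⟩
        refine ⟨J j ξ, ?_⟩
        simp only [ContinuousLinearMap.comp_apply, LinearIsometry.coe_toContinuousLinearMap]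
        rw [hJadjJ]
      · rintro _ ⟨y, rfl⟩
        exact ⟨ContinuousLinearMap.adjoint (J j).toContinuousLinearMap y, by
          simp [ContinuousLinearMap.comp_apply]⟩
  -- Fixed points of P j
  have hfix : ∀ j (z : Hlim), z ∈ Set.range (J j) → P j z = z := by
    intro j z hz
    refine aux_fix (hP j).2.1 ?_
    rw [(hP j).2.2]
    exact hz
  constructor
  · -- Part 1
    intro j Rj hRj
    have key : ∀ ξ : H j, R (J j ξ) = J j (Rj ξ) := by
      intro ξ
      obtain ⟨hm, hval⟩ := hRj.1 ξ
      set x : (D j).domain := ⟨Rj ξ, hm⟩ with hx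
      have hmem0 : J j (x : H j) ∈ D₀.domain := by
        have : J j (x : H j) ∈ (D₀.domain : Set Hlim) := by
          rw [hdom]
          exact Set.mem_iUnion.2 ⟨j, ⟨(x : H j), x.2, rfl⟩⟩
        exact this
      have hmemc : J j (x : H j) ∈ D₀.closure.domain := D₀.le_closure.1 hmem0
      have hvalc : D₀.closure ⟨J j (x : H j), hmemc⟩ = J j ((D j) x) := by
        rw [← D₀.le_closure.2
          (show ((⟨J j (x : H j), hmem0⟩ : D₀.domain) : Hlim)
            = ((⟨J j (x : H j), hmemc⟩ : D₀.closure.domain) : Hlim) from rfl)]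
        exact hact j x hmem0
      have h2 := hR.2 ⟨J j (x : H j), hmemc⟩
      rw [hvalc] at h2
      have h3 : J j ξ = J j ((D j) x) - lam • J j (x : H j) := by
        rw [← hval]
        simp [map_sub, map_smul]; rfl
      rw [h3, h2]
    ext y
    simp only [ContinuousLinearMap.comp_apply, LinearIsometry.coe_toContinuousLinearMap]
    rw [hPJ j]
    simp only [ContinuousLinearMap.comp_apply, LinearIsometry.coe_toContinuousLinearMap]
    rw [key, hJadjJ]
  · -- Part 2
    have hnorm : ∀ j (z : Hlim), ‖P j z‖ ≤ ‖z‖ := fun j => aux_norm_le (hP j).1 (hP j).2.1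
    have hPt : ∀ x : Hlim, Tendsto (fun j => P j x) atTop (𝓝 x) := by
      intro x
      rw [Metric.tendsto_atTop]
      intro ε hε
      obtain ⟨y, hy, hxy⟩ := Metric.mem_closure_iff.1 (hdense x) (ε / 2) (by positivity)
      obtain ⟨j₀, hj₀⟩ := Set.mem_iUnion.1 hy
      refine ⟨j₀, fun n hn => ?_⟩
      have hyn : y ∈ Set.range (J n) := by
        obtain ⟨ξ, rfl⟩ := hj₀
        exact ⟨I j₀ n hn ξ, hJ j₀ n hn ξ⟩
      have h1 : P n y = y := hfix n y hyn
      have hd : ‖x - y‖ < ε / 2 := by rwa [← dist_eq_norm]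
      calc dist (P n x) x ≤ dist (P n x) y + dist y x := dist_triangle _ _ _
        _ = ‖P n x - P n y‖ + dist y x := by rw [h1, dist_eq_norm]
        _ = ‖P n (x - y)‖ + dist y x := by rw [map_sub]
        _ ≤ ‖x - y‖ + ‖x - y‖ := by
            rw [dist_comm, dist_eq_norm]
            exact add_le_add (hnorm n _) le_rfl
        _ < ε / 2 + ε / 2 := by linarith
        _ = ε := by ring
    intro x
    have hRP : Tendsto (fun j => R (P j x)) atTop (𝓝 (R x)) :=
      (R.continuous.tendsto _).comp (hPt x)
    rw [tendsto_iff_norm_sub_tendsto_zero]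
    have hb : ∀ j, ‖(P j ∘L R ∘L P j) x - R x‖ ≤ ‖R (P j x) - R x‖ + ‖P j (R x) - R x‖ := by
      intro j
      calc ‖(P j ∘L R ∘L P j) x - R x‖
          ≤ ‖P j (R (P j x)) - P j (R x)‖ + ‖P j (R x) - R x‖ := by
            simpa [ContinuousLinearMap.comp_apply] using
              norm_sub_le_norm_sub_add_norm_sub (P j (R (P j x))) (P j (R x)) (R x)
        _ ≤ ‖R (P j x) - R x‖ + ‖P j (R x) - R x‖ := by
            rw [← map_sub]
            exact add_le_add (hnorm j _) le_rfl
    have hg : Tendsto (fun j => ‖R (P j x) - R x‖ + ‖P j (R x) - R x‖) atTop (𝓝 0) := by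
      have h1 : Tendsto (fun j => ‖R (P j x) - R x‖) atTop (𝓝 0) :=
        tendsto_iff_norm_sub_tendsto_zero.1 hRP
      have h2 : Tendsto (fun j => ‖P j (R x) - R x‖) atTop (𝓝 0) :=
        tendsto_iff_norm_sub_tendsto_zero.1 (hPt (R x))
      simpa using h1.add h2
    exact squeeze_zero (fun j => norm_nonneg _) hb hg
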